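/- arXiv:2512.07028 — 5 statements merged into one kernel-verified Lean document; each statement's English description precedes it below -/
import Mathlib

section
/- For all x, y > 0 and every integer m ≥ 2, ln G⋆(x,y) = ∑_{k=1}^{m-1} (1/k)((x-y)/2)^{2k} ζ(2k, 1+(x+y)/2) + R, where the remainder R satisfies 0 ≤ R ≤ (1/m)((x-y)/2)^{2m} ∑_{n=1}^∞ 1/((n+x)^m (n+y)^m). -/
open Filter Finset Real Topology

lemma gurland_hasSum (x y : ℝ) (hx : 0 < x) (hy : 0 < y) :
    HasSum (fun j : ℕ => -Real.log (1 - ((x - y) / 2) ^ 2 / (1 + (x + y) / 2 + j) ^ 2))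
      (Real.log (Real.Gamma (1 + x) * Real.Gamma (1 + y) /
        (Real.Gamma (1 + (x + y) / 2)) ^ 2)) := by
  set c : ℝ := 1 + (x + y) / 2 with hc
  set d : ℝ := (x - y) / 2 with hd
  have hcpos : 0 < c := by positivity
  have hpx : ∀ j : ℕ, (0:ℝ) < 1 + x + j := fun j => by positivity
  have hpy : ∀ j : ℕ, (0:ℝ) < 1 + y + j := fun j => by positivity
  have hpc : ∀ j : ℕ, (0:ℝ) < c + j := fun j => by positivity
  have hkey : ∀ j : ℕ, (c + j) ^ 2 - d ^ 2 = (1 + x + j) * (1 + y + j) := by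
    intro j; rw [hc, hd]; ring
  -- q j
  set q : ℕ → ℝ := fun j => (c + j) ^ 2 / ((1 + x + j) * (1 + y + j)) with hq
  have hqpos : ∀ j, 0 < q j := fun j => by
    have := hpx j; have := hpy j; have := hpc j; positivity
  have hqone : ∀ j, 1 ≤ q j := by
    intro j
    rw [hq, le_div_iff₀ (by have := hpx j; have := hpy j; positivity), one_mul, ← hkey j]
    nlinarith [sq_nonneg d]
  -- f = log q
  have hflog : ∀ j : ℕ, -Real.log (1 - d ^ 2 / (c + j) ^ 2) = Real.log (q j) := by
    intro j
    have h1 : (1:ℝ) - d ^ 2 / (c + j) ^ 2 = ((1 + x + j) * (1 + y + j)) / (c + j) ^ 2 := by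
      rw [← hkey j]; field_simp
    rw [h1, hq, Real.log_div (by have := hpx j; have := hpy j; positivity)
      (by have := hpc j; positivity), Real.log_div (by have := hpc j; positivity)
      (by have := hpx j; have := hpy j; positivity)]
    ring
  have hfnonneg : ∀ j : ℕ, 0 ≤ Real.log (q j) := fun j => Real.log_nonneg (hqone j)
  -- Gamma positivity
  have hG1 : 0 < Real.Gamma (1 + x) := Real.Gamma_pos_of_pos (by positivity)
  have hG2 : 0 < Real.Gamma (1 + y) := Real.Gamma_pos_of_pos (by positivity)
  have hG3 : 0 < Real.Gamma c := Real.Gamma_pos_of_pos hcpos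
  set G : ℝ := Real.Gamma (1 + x) * Real.Gamma (1 + y) / (Real.Gamma c) ^ 2 with hGdef
  have hGpos : 0 < G := by rw [hGdef]; positivity
  -- ratio of GammaSeq
  have hratio : ∀ n : ℕ,
      Real.GammaSeq (1 + x) (n + 1) * Real.GammaSeq (1 + y) (n + 1) /
        (Real.GammaSeq c (n + 1)) ^ 2 = ∏ j ∈ Finset.range (n + 2), q j := by
    intro n
    have hN : (0:ℝ) < ((n:ℝ) + 1) := by positivity
    have hNc : ((n + 1 : ℕ) : ℝ) = (n : ℝ) + 1 := by push_cast; ring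
    have hrpow : ((n:ℝ) + 1) ^ (1 + x) * ((n:ℝ) + 1) ^ (1 + y)
        = (((n:ℝ) + 1) ^ (c : ℝ)) ^ 2 := by
      rw [← Real.rpow_add hN, sq, ← Real.rpow_add hN, hc]
      ring_nf
    have hP1 : (0:ℝ) < ∏ j ∈ Finset.range (n + 2), (1 + x + j) :=
      Finset.prod_pos fun j _ => hpx j
    have hP2 : (0:ℝ) < ∏ j ∈ Finset.range (n + 2), (1 + y + j) :=
      Finset.prod_pos fun j _ => hpy j
    have hP3 : (0:ℝ) < ∏ j ∈ Finset.range (n + 2), (c + j) :=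
      Finset.prod_pos fun j _ => hpc j
    have hfact : (0:ℝ) < ((n + 1).factorial : ℝ) := by positivity
    rw [Real.GammaSeq, Real.GammaSeq, Real.GammaSeq, hq]
    rw [Finset.prod_div_distrib, Finset.prod_mul_distrib, Finset.prod_pow]
    rw [hNc]
    field_simp
    linear_combination hrpow
  -- limit of ratio
  have hGne : (Real.Gamma c) ^ 2 ≠ 0 := by positivity
  have hT : Tendsto (fun n : ℕ => Real.GammaSeq (1 + x) n * Real.GammaSeq (1 + y) n /
      (Real.GammaSeq c n) ^ 2) atTop (𝓝 G) := by
    rw [hGdef]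
    exact ((Real.GammaSeq_tendsto_Gamma (1 + x)).mul
      (Real.GammaSeq_tendsto_Gamma (1 + y))).div
      ((Real.GammaSeq_tendsto_Gamma c).pow 2) hGne
  have hT1 : Tendsto (fun n : ℕ => ∏ j ∈ Finset.range (n + 2), q j) atTop (𝓝 G) := by
    have := (Filter.tendsto_add_atTop_iff_nat 1).2 hT
    simp only [hratio] at this
    exact this
  have hT2 : Tendsto (fun n : ℕ => ∏ j ∈ Finset.range n, q j) atTop (𝓝 G) :=
    (Filter.tendsto_add_atTop_iff_nat 2).1 hT1
  -- log
  have hT3 : Tendsto (fun n : ℕ => ∑ j ∈ Finset.range n, Real.log (q j)) atTop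
      (𝓝 (Real.log G)) := by
    have hcont : ContinuousAt Real.log G := Real.continuousAt_log hGpos.ne'
    have := hcont.tendsto.comp hT2
    convert this using 2 with n
    rw [Function.comp_apply, Real.log_prod (fun j _ => (hqpos j).ne')]
  -- summability
  have hmono : Monotone (fun n : ℕ => ∑ j ∈ Finset.range n, Real.log (q j)) := by
    intro a b hab
    exact Finset.sum_le_sum_of_subset_of_nonneg (Finset.range_subset_range.2 hab)
      (fun j _ _ => hfnonneg j)
  have hbdd : ∀ n : ℕ, ∑ j ∈ Finset.range n, Real.log (q j) ≤ Real.log G :=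
    fun n => hmono.ge_of_tendsto hT3 n
  have hsum : Summable (fun j : ℕ => Real.log (q j)) :=
    summable_of_sum_range_le hfnonneg hbdd
  have : HasSum (fun j : ℕ => Real.log (q j)) (Real.log G) :=
    (hsum.hasSum_iff_tendsto_nat).2 hT3
  simpa only [hflog] using this

/-- Hurwitz zeta at positive even integer arguments, as a real series. -/
noncomputable def hurwitzZetaNat (s : ℕ) (a : ℝ) : ℝ := ∑' m : ℕ, 1 / ((m : ℝ) + a) ^ s

theorem log_gurland_star_expansion (x y : ℝ) (hx : 0 < x) (hy : 0 < y) (m : ℕ) (hm : 2 ≤ m) :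
    ∃ R : ℝ,
      Real.log (Real.Gamma (1 + x) * Real.Gamma (1 + y) /
          (Real.Gamma (1 + (x + y) / 2)) ^ 2) =
        (∑ k ∈ Finset.Icc 1 (m - 1),
          (1 / (k : ℝ)) * ((x - y) / 2) ^ (2 * k) * hurwitzZetaNat (2 * k) (1 + (x + y) / 2)) + R ∧
      0 ≤ R ∧
      R ≤ (1 / (m : ℝ)) * ((x - y) / 2) ^ (2 * m) *
        ∑' n : ℕ, 1 / ((((n : ℝ) + 1) + x) ^ m * (((n : ℝ) + 1) + y) ^ m) := by
  have hm1 : 1 ≤ m := le_trans one_le_two hm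
  set c : ℝ := 1 + (x + y) / 2 with hc
  set d : ℝ := (x - y) / 2 with hd
  have hcpos : 0 < c := by positivity
  have hpx : ∀ j : ℕ, (0:ℝ) < 1 + x + j := fun j => by positivity
  have hpy : ∀ j : ℕ, (0:ℝ) < 1 + y + j := fun j => by positivity
  have hpc : ∀ j : ℕ, (0:ℝ) < c + j := fun j => by positivity
  have hkey : ∀ j : ℕ, (c + j) ^ 2 - d ^ 2 = (1 + x + j) * (1 + y + j) := by
    intro j; rw [hc, hd]; ring
  set u : ℕ → ℝ := fun j => d ^ 2 / (c + j) ^ 2 with hu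
  have hu0 : ∀ j, 0 ≤ u j := fun j => by have := hpc j; positivity
  have hu1 : ∀ j, u j < 1 := by
    intro j
    rw [hu, div_lt_one (by have := hpc j; positivity)]
    nlinarith [hkey j, hpx j, hpy j]
  have husub : ∀ j : ℕ, (1:ℝ) - u j = ((1 + x + j) * (1 + y + j)) / (c + j) ^ 2 := by
    intro j
    rw [hu, ← hkey j]
    field_simp
  have hupow : ∀ (j t : ℕ), u j ^ t = d ^ (2 * t) * (1 / ((j:ℝ) + c) ^ (2 * t)) := by
    intro j t
    rw [hu, div_pow, ← pow_mul, ← pow_mul, add_comm c (j:ℝ)]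
    ring
  have hdpow : ∀ t : ℕ, (0:ℝ) ≤ d ^ (2 * t) := fun t => by rw [pow_mul]; positivity
  -- Step A
  have hA := gurland_hasSum x y hx hy
  rw [← hc, ← hd] at hA
  set L : ℝ := Real.log (Real.Gamma (1 + x) * Real.Gamma (1 + y) / (Real.Gamma c) ^ 2) with hL
  -- row expansions
  have hrow : ∀ j : ℕ, HasSum (fun k : ℕ => u j ^ (k + 1) / ((k:ℝ) + 1))
      (-Real.log (1 - u j)) := by
    intro j
    have habs : |u j| < 1 := by rw [abs_of_nonneg (hu0 j)]; exact hu1 j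
    simpa using Real.hasSum_pow_div_log_of_abs_lt_one habs
  set F : ℕ × ℕ → ℝ := fun p => u p.1 ^ (p.2 + 1) / ((p.2:ℝ) + 1) with hF
  have hFnn : 0 ≤ F := by
    intro p
    have := hu0 p.1
    simp only [hF]
    positivity
  have hFsummable : Summable F := by
    refine (summable_prod_of_nonneg hFnn).2 ⟨fun j => (hrow j).summable, ?_⟩
    have : (fun j => ∑' k, F (j, k)) = fun j => -Real.log (1 - u j) := by
      funext j; exact (hrow j).tsum_eq
    rw [show (fun j => ∑' k, (fun p : ℕ × ℕ => F p) (j, k)) = fun j => -Real.log (1 - u j) from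
      funext fun j => (hrow j).tsum_eq]
    exact hA.summable
  -- tsum of F equals L
  have hFL : ∑' p : ℕ × ℕ, F p = L := by
    rw [Summable.tsum_prod hFsummable]
    rw [show (fun j => ∑' k, F (j, k)) = fun j => -Real.log (1 - u j) from
      funext fun j => (hrow j).tsum_eq]
    exact hA.tsum_eq
  -- swap
  have hswap : ∑' (k : ℕ), ∑' (j : ℕ), F (j, k) = L := by
    rw [Summable.tsum_comm (f := fun j k => F (j, k)) hFsummable]
    rw [← Summable.tsum_prod hFsummable]
    exact hFL
  have hcolsummable : ∀ k : ℕ, Summable fun j => F (j, k) :=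
    fun k => hFsummable.prod_symm.prod_factor k
  have hcolsumssummable : Summable fun k : ℕ => ∑' j, F (j, k) := by
    have h1 : Summable fun p : ℕ × ℕ => F p.swap := hFsummable.prod_symm
    exact ((summable_prod_of_nonneg (fun p => hFnn p.swap)).1 h1).2
  -- identify column sums
  set g : ℕ → ℝ := fun k => d ^ (2 * (k + 1)) / ((k:ℝ) + 1) * hurwitzZetaNat (2 * (k + 1)) c
    with hg
  have hgk : ∀ k : ℕ, ∑' j, F (j, k) = g k := by
    intro k
    have : ∀ j : ℕ, F (j, k) = (d ^ (2 * (k + 1)) / ((k:ℝ) + 1)) *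
        (1 / ((j:ℝ) + c) ^ (2 * (k + 1))) := by
      intro j
      simp only [hF]
      rw [hupow j (k + 1)]
      ring
    rw [tsum_congr this, tsum_mul_left, hg]
    simp only [hurwitzZetaNat]
  have hgsummable : Summable g := by
    rw [show g = fun k => ∑' j, F (j, k) from funext fun k => (hgk k).symm]
    exact hcolsumssummable
  have hgL : ∑' k, g k = L := by
    rw [← hswap]; exact tsum_congr fun k => (hgk k).symm
  have hgnn : ∀ k, 0 ≤ g k := by
    intro k
    rw [← hgk k]
    exact tsum_nonneg fun j => hFnn (j, k)
  -- split
  have hsplit := Summable.sum_add_tsum_nat_add (f := g) (m - 1) hgsummable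
  refine ⟨∑' i, g (i + (m - 1)), ?_, ?_, ?_⟩
  · rw [← hgL, ← hsplit]
    congr 1
    rw [← Finset.Ico_add_one_right_eq_Icc, Nat.sub_add_cancel hm1, Finset.sum_Ico_eq_sum_range]
    refine Finset.sum_congr rfl fun i _ => ?_
    rw [show 1 + i = i + 1 from Nat.add_comm 1 i, hg]
    push_cast
    ring
  · exact tsum_nonneg fun i => hgnn _
  · -- the remainder bound
    obtain ⟨m', rfl⟩ : ∃ m', m = m' + 1 := ⟨m - 1, by omega⟩
    simp only [Nat.add_sub_cancel]
    set M : ℕ := m' + 1 with hM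
    have hMpos : (0:ℝ) < (M:ℝ) := by positivity
    -- geometric rows
    have hwpos : ∀ j, (0:ℝ) < 1 - u j := fun j => by linarith [hu1 j]
    set w : ℕ → ℝ := fun j => u j ^ M * (1 - u j)⁻¹ with hw
    have hrow2 : ∀ j : ℕ, HasSum (fun k : ℕ => u j ^ (k + M)) (w j) := by
      intro j
      have := (hasSum_geometric_of_lt_one (hu0 j) (hu1 j)).mul_left (u j ^ M)
      simpa [pow_add, mul_comm] using this
    have hwnn : ∀ j, 0 ≤ w j := fun j => by
      have := hu0 j; have := hwpos j
      simp only [hw]; positivity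
    -- the comparison bound
    set Bnd : ℕ → ℝ := fun j => d ^ (2 * M) * (1 / ((1 + x + (j:ℝ)) ^ M * (1 + y + (j:ℝ)) ^ M))
      with hBnd
    have hAC : ∀ j : ℕ, (1 + x + (j:ℝ)) * (1 + y + (j:ℝ)) ≤ (c + (j:ℝ)) ^ 2 := by
      intro j; nlinarith [hkey j, sq_nonneg d]
    have hwB : ∀ j, w j ≤ Bnd j := by
      intro j
      have hxj := hpx j; have hyj := hpy j; have hcj := hpc j
      have hA0 : (0:ℝ) < (1 + x + (j:ℝ)) * (1 + y + (j:ℝ)) := by positivity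
      have hC0 : (0:ℝ) < (c + (j:ℝ)) ^ 2 := by positivity
      have key : (c + (j:ℝ)) ^ 2 * ((1 + x + (j:ℝ)) * (1 + y + (j:ℝ))) ^ M ≤
          ((c + (j:ℝ)) ^ 2) ^ M * ((1 + x + (j:ℝ)) * (1 + y + (j:ℝ))) := by
        have h1 : ((1 + x + (j:ℝ)) * (1 + y + (j:ℝ))) ^ m' ≤ ((c + (j:ℝ)) ^ 2) ^ m' :=
          pow_le_pow_left₀ hA0.le (hAC j) m'
        calc (c + (j:ℝ)) ^ 2 * ((1 + x + (j:ℝ)) * (1 + y + (j:ℝ))) ^ M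
            = ((1 + x + (j:ℝ)) * (1 + y + (j:ℝ))) ^ m' *
              ((c + (j:ℝ)) ^ 2 * ((1 + x + (j:ℝ)) * (1 + y + (j:ℝ)))) := by
              rw [hM, pow_succ]; ring
          _ ≤ ((c + (j:ℝ)) ^ 2) ^ m' *
              ((c + (j:ℝ)) ^ 2 * ((1 + x + (j:ℝ)) * (1 + y + (j:ℝ)))) := by
              apply mul_le_mul_of_nonneg_right h1; positivity
          _ = ((c + (j:ℝ)) ^ 2) ^ M * ((1 + x + (j:ℝ)) * (1 + y + (j:ℝ))) := by
              rw [hM, pow_succ]; ring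
      have hwval : w j = d ^ (2 * M) * (c + (j:ℝ)) ^ 2 /
          (((c + (j:ℝ)) ^ 2) ^ M * ((1 + x + (j:ℝ)) * (1 + y + (j:ℝ)))) := by
        simp only [hw]
        rw [husub j, hu]
        rw [inv_div, div_pow, ← pow_mul]
        field_simp
      rw [hwval]
      show _ ≤ d ^ (2 * M) * (1 / ((1 + x + (j:ℝ)) ^ M * (1 + y + (j:ℝ)) ^ M))
      rw [← mul_pow, mul_one_div, div_le_div_iff₀ (by positivity) (by positivity)]
      calc d ^ (2 * M) * (c + (j:ℝ)) ^ 2 * ((1 + x + (j:ℝ)) * (1 + y + (j:ℝ))) ^ M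
          = d ^ (2 * M) * ((c + (j:ℝ)) ^ 2 * ((1 + x + (j:ℝ)) * (1 + y + (j:ℝ))) ^ M) := by ring
        _ ≤ d ^ (2 * M) * (((c + (j:ℝ)) ^ 2) ^ M * ((1 + x + (j:ℝ)) * (1 + y + (j:ℝ)))) := by
            exact mul_le_mul_of_nonneg_left key (hdpow M)
        _ = d ^ (2 * M) * (((c + (j:ℝ)) ^ 2) ^ M * ((1 + x + (j:ℝ)) * (1 + y + (j:ℝ)))) := rfl
    -- summability of the bound
    have hS2 : Summable fun n : ℕ => 1 / ((n:ℝ) + 1) ^ 2 := by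
      have h0 : Summable fun n : ℕ => 1 / (n:ℝ) ^ 2 := summable_one_div_nat_pow.2 one_lt_two
      have := (summable_nat_add_iff 1).2 h0
      simpa using this
    have hS : Summable fun j : ℕ => 1 / ((1 + x + (j:ℝ)) ^ M * (1 + y + (j:ℝ)) ^ M) := by
      apply Summable.of_nonneg_of_le (fun j => by have := hpx j; have := hpy j; positivity) _ hS2
      intro j
      have hxj := hpx j; have hyj := hpy j
      apply one_div_le_one_div_of_le (by positivity)
      have h1 : ((j:ℝ) + 1) ^ 2 ≤ ((j:ℝ) + 1) ^ (2 * M) := by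
        apply pow_le_pow_right₀ (by linarith [Nat.cast_nonneg (α := ℝ) j]) (by omega)
      have h2 : ((j:ℝ) + 1) ^ (2 * M) = ((j:ℝ) + 1) ^ M * ((j:ℝ) + 1) ^ M := by
        rw [two_mul, pow_add]
      have h3 : ((j:ℝ) + 1) ^ M ≤ (1 + x + (j:ℝ)) ^ M :=
        pow_le_pow_left₀ (by positivity) (by linarith) M
      have h4 : ((j:ℝ) + 1) ^ M ≤ (1 + y + (j:ℝ)) ^ M :=
        pow_le_pow_left₀ (by positivity) (by linarith) M
      calc ((j:ℝ) + 1) ^ 2 ≤ ((j:ℝ) + 1) ^ M * ((j:ℝ) + 1) ^ M := by rw [← h2]; exact h1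
        _ ≤ (1 + x + (j:ℝ)) ^ M * (1 + y + (j:ℝ)) ^ M := by
            apply mul_le_mul h3 h4 (by positivity) (by positivity)
    have hBndsummable : Summable Bnd := by
      rw [hBnd]
      exact hS.mul_left _
    have hwsummable : Summable w :=
      Summable.of_nonneg_of_le hwnn hwB hBndsummable
    -- second double family
    set F2 : ℕ × ℕ → ℝ := fun p => u p.1 ^ (p.2 + M) with hF2
    have hF2nn : 0 ≤ F2 := fun p => by have := hu0 p.1; simp only [hF2]; positivity
    have hF2summable : Summable F2 := by
      refine (summable_prod_of_nonneg hF2nn).2 ⟨fun j => (hrow2 j).summable, ?_⟩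
      rw [show (fun j => ∑' k, (fun p : ℕ × ℕ => F2 p) (j, k)) = w from
        funext fun j => (hrow2 j).tsum_eq]
      exact hwsummable
    have hT_eq : ∀ i : ℕ, (∑' j, F2 (j, i)) =
        d ^ (2 * (i + M)) * hurwitzZetaNat (2 * (i + M)) c := by
      intro i
      have : ∀ j : ℕ, F2 (j, i) = d ^ (2 * (i + M)) * (1 / ((j:ℝ) + c) ^ (2 * (i + M))) := by
        intro j
        simp only [hF2]
        rw [hupow j (i + M), Nat.add_comm i M, Nat.add_comm M i]
      rw [tsum_congr this, tsum_mul_left]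
      simp only [hurwitzZetaNat]
    have hTsummable : Summable fun i : ℕ => ∑' j, F2 (j, i) := by
      have h1 : Summable fun p : ℕ × ℕ => F2 p.swap := hF2summable.prod_symm
      exact ((summable_prod_of_nonneg (fun p => hF2nn p.swap)).1 h1).2
    have hswap2 : ∑' (i : ℕ), ∑' (j : ℕ), F2 (j, i) = ∑' j, w j := by
      rw [Summable.tsum_comm (f := fun j k => F2 (j, k)) hF2summable]
      exact tsum_congr fun j => (hrow2 j).tsum_eq
    have hTsummable' : Summable fun i : ℕ =>
        d ^ (2 * (i + M)) * hurwitzZetaNat (2 * (i + M)) c := by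
      rw [show (fun i : ℕ => d ^ (2 * (i + M)) * hurwitzZetaNat (2 * (i + M)) c)
        = fun i => ∑' j, F2 (j, i) from funext fun i => (hT_eq i).symm]
      exact hTsummable
    have hZnn : ∀ t : ℕ, 0 ≤ hurwitzZetaNat t c := by
      intro t
      exact tsum_nonneg fun j => by positivity
    -- termwise inequality
    have hterm : ∀ i : ℕ, g (i + m') ≤
        (1 / (M:ℝ)) * (d ^ (2 * (i + M)) * hurwitzZetaNat (2 * (i + M)) c) := by
      intro i
      have hnat : i + m' + 1 = i + M := by rw [hM]; omega
      simp only [hg, hnat]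
      have hcast : ((i + m' : ℕ) : ℝ) + 1 = (i:ℝ) + (M:ℝ) := by push_cast [hM]; ring
      rw [hcast]
      have hnum : 0 ≤ d ^ (2 * (i + M)) * hurwitzZetaNat (2 * (i + M)) c :=
        mul_nonneg (hdpow (i + M)) (hZnn (2 * (i + M)))
      have hle : (M:ℝ) ≤ (i:ℝ) + (M:ℝ) := by
        have : (0:ℝ) ≤ (i:ℝ) := Nat.cast_nonneg i
        linarith
      calc d ^ (2 * (i + M)) / ((i:ℝ) + (M:ℝ)) * hurwitzZetaNat (2 * (i + M)) c
          = (d ^ (2 * (i + M)) * hurwitzZetaNat (2 * (i + M)) c) / ((i:ℝ) + (M:ℝ)) := by ring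
        _ ≤ (d ^ (2 * (i + M)) * hurwitzZetaNat (2 * (i + M)) c) / (M:ℝ) :=
            div_le_div_of_nonneg_left hnum hMpos hle |>.trans_eq rfl
        _ = (1 / (M:ℝ)) * (d ^ (2 * (i + M)) * hurwitzZetaNat (2 * (i + M)) c) := by ring
    -- assemble
    calc ∑' i, g (i + m')
        ≤ ∑' i, (1 / (M:ℝ)) * (d ^ (2 * (i + M)) * hurwitzZetaNat (2 * (i + M)) c) :=
          Summable.tsum_le_tsum hterm ((summable_nat_add_iff m').2 hgsummable) (hTsummable'.mul_left _)
      _ = (1 / (M:ℝ)) * ∑' i, (d ^ (2 * (i + M)) * hurwitzZetaNat (2 * (i + M)) c) :=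
          tsum_mul_left
      _ = (1 / (M:ℝ)) * ∑' j, w j := by
          rw [show (fun i : ℕ => d ^ (2 * (i + M)) * hurwitzZetaNat (2 * (i + M)) c)
            = fun i => ∑' j, F2 (j, i) from funext fun i => (hT_eq i).symm, hswap2]
      _ ≤ (1 / (M:ℝ)) * ∑' j, Bnd j := by
          apply mul_le_mul_of_nonneg_left (Summable.tsum_le_tsum hwB hwsummable hBndsummable)
          positivity
      _ = (1 / (M:ℝ)) * d ^ (2 * M) *
          ∑' n : ℕ, 1 / ((((n:ℝ) + 1) + x) ^ M * (((n:ℝ) + 1) + y) ^ M) := by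
          rw [hBnd, tsum_mul_left, ← mul_assoc]
          congr 1
          exact tsum_congr fun n => by ring_nf
end

section
/- Let x, y > 0 satisfy |x-y|/(2(1+√(xy))) < 1. Then for every integer m ≥ 2, 0 ≤ ln G⋆(x,y) − S_m(x,y) ≤ (1/m)(|x-y|/(2(1+√(xy))))^{2m} (1 + (1+√(xy))/(2m-1)), where S_m(x,y) = ∑_{k=1}^{m-1} (1/k)((x-y)/2)^{2k} ζ(2k, 1+(x+y)/2). -/
open Finset Filter Topology


lemma teleIneq (b : ℝ) (hb : 1 ≤ b) (q : ℕ) :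
    (q : ℝ) * (((b + 1) ^ (q + 1))⁻¹) ≤ (b ^ q)⁻¹ - ((b + 1) ^ q)⁻¹ := by
  have hb0 : (0:ℝ) < b := by linarith
  have hb1 : (0:ℝ) < b + 1 := by linarith
  have hbern : 1 + (q + 1 : ℝ) * (1 / b) ≤ (1 + 1 / b) ^ (q + 1) := by
    have h0 : (0:ℝ) ≤ 1 / b := by positivity
    have := one_add_mul_le_pow (a := 1 / b) (by linarith : (-2:ℝ) ≤ 1 / b) (q + 1)
    simpa using this
  have key : b ^ q * (b + 1 + q) ≤ (b + 1) ^ (q + 1) := by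
    have h1 : (1 + 1 / b) ^ (q + 1) * b ^ (q + 1) = (b + 1) ^ (q + 1) := by
      rw [← mul_pow]; congr 1; field_simp
    have h2 : (1 + (q + 1 : ℝ) * (1 / b)) * b ^ (q + 1) = b ^ q * (b + 1 + q) := by
      field_simp; ring
    calc b ^ q * (b + 1 + q) = (1 + (q + 1 : ℝ) * (1 / b)) * b ^ (q + 1) := h2.symm
      _ ≤ (1 + 1 / b) ^ (q + 1) * b ^ (q + 1) := by
          exact mul_le_mul_of_nonneg_right hbern (by positivity)
      _ = (b + 1) ^ (q + 1) := h1
  have key' : (q:ℝ) * b ^ q ≤ ((b + 1) ^ q - b ^ q) * (b + 1) := by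
    have hps : (b + 1) ^ (q + 1) = (b + 1) ^ q * (b + 1) := pow_succ _ _
    nlinarith [key]
  have hA : (0:ℝ) < b ^ q := by positivity
  have hB : (0:ℝ) < (b + 1) ^ q := by positivity
  have hC : (0:ℝ) < (b + 1) ^ (q + 1) := by positivity
  have hfin : (q:ℝ) / ((b + 1) ^ (q + 1)) ≤ ((b + 1) ^ q - b ^ q) / (b ^ q * (b + 1) ^ q) := by
    rw [div_le_div_iff₀ hC (by positivity)]
    nlinarith [mul_le_mul_of_nonneg_right key' hB.le, pow_succ (b + 1) q]
  calc (q:ℝ) * (((b + 1) ^ (q + 1))⁻¹) = q / ((b + 1) ^ (q + 1)) := (div_eq_mul_inv _ _).symm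
    _ ≤ ((b + 1) ^ q - b ^ q) / (b ^ q * (b + 1) ^ q) := hfin
    _ = (b ^ q)⁻¹ - ((b + 1) ^ q)⁻¹ := by
        rw [inv_eq_one_div, inv_eq_one_div, div_sub_div _ _ hA.ne' hB.ne', one_mul, mul_one]

lemma ratioBound (D C A E : ℝ) (hD : 0 ≤ D) (hA : 0 < A) (hAC : A ≤ C) (hAE : A ^ 2 ≤ E)
    (hEpos : 0 < E) (h1t : 1 - D / C ^ 2 = E / C ^ 2) (M : ℕ) :
    (D / C ^ 2) ^ (M + 2) / ((M + 2 : ℝ) * (1 - D / C ^ 2)) ≤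
      1 / (M + 2 : ℝ) * D ^ (M + 2) * ((A ^ 2) ^ (M + 2))⁻¹ := by
  have hC : (0:ℝ) < C := lt_of_lt_of_le hA hAC
  have hM : (0:ℝ) < (M:ℝ) + 2 := by positivity
  have key : (A ^ 2) ^ (M + 2) * C ^ 2 ≤ (C ^ 2) ^ (M + 2) * E := by
    have e1 : (A ^ 2) ^ (M + 2) * C ^ 2 = (A ^ 2) ^ (M + 1) * (A ^ 2 * C ^ 2) := by ring
    have e2 : (C ^ 2) ^ (M + 2) * E = (C ^ 2) ^ (M + 1) * (E * C ^ 2) := by ring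
    have hsq : A ^ 2 ≤ C ^ 2 := by nlinarith
    rw [e1, e2]
    gcongr
  have hL : (D / C ^ 2) ^ (M + 2) / ((M + 2 : ℝ) * (1 - D / C ^ 2)) =
      D ^ (M + 2) * C ^ 2 / (((M:ℝ) + 2) * ((C ^ 2) ^ (M + 2) * E)) := by
    rw [h1t, div_pow]
    rw [div_div, div_eq_div_iff (by positivity) (by positivity)]
    field_simp
  have hR : 1 / (M + 2 : ℝ) * D ^ (M + 2) * ((A ^ 2) ^ (M + 2))⁻¹ =
      D ^ (M + 2) / (((M:ℝ) + 2) * (A ^ 2) ^ (M + 2)) := by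
    field_simp
  rw [hL, hR, div_le_div_iff₀ (by positivity) (by positivity)]
  calc D ^ (M + 2) * C ^ 2 * (((M:ℝ) + 2) * (A ^ 2) ^ (M + 2))
      = (D ^ (M + 2) * ((M:ℝ) + 2)) * ((A ^ 2) ^ (M + 2) * C ^ 2) := by ring
    _ ≤ (D ^ (M + 2) * ((M:ℝ) + 2)) * ((C ^ 2) ^ (M + 2) * E) := by
        apply mul_le_mul_of_nonneg_left key (by positivity)
    _ = D ^ (M + 2) * (((M:ℝ) + 2) * ((C ^ 2) ^ (M + 2) * E)) := by ring

lemma gammaRatio (x y : ℝ) (hx : 0 < x) (hy : 0 < y) (n : ℕ) (hn : 1 ≤ n) :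
    Real.GammaSeq (1 + x) n * Real.GammaSeq (1 + y) n / (Real.GammaSeq (1 + (x + y) / 2) n) ^ 2
      = ∏ j ∈ range (n + 1), ((1 + (x + y) / 2 + j) ^ 2 / ((1 + x + j) * (1 + y + j))) := by
  set c : ℝ := 1 + (x + y) / 2 with hc
  have hN : (0:ℝ) < n := by exact_mod_cast hn
  have hPx : (0:ℝ) < ∏ j ∈ range (n + 1), (1 + x + (j:ℝ)) :=
    Finset.prod_pos fun j _ => by positivity
  have hPy : (0:ℝ) < ∏ j ∈ range (n + 1), (1 + y + (j:ℝ)) :=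
    Finset.prod_pos fun j _ => by positivity
  have hPc : (0:ℝ) < ∏ j ∈ range (n + 1), (c + (j:ℝ)) :=
    Finset.prod_pos fun j _ => by positivity
  have hF : (0:ℝ) < (n.factorial : ℝ) := by exact_mod_cast n.factorial_pos
  have hpow : (n:ℝ) ^ (1 + x) * (n:ℝ) ^ (1 + y) = ((n:ℝ) ^ c) ^ 2 := by
    rw [← Real.rpow_add hN, sq, ← Real.rpow_add hN]
    congr 1
    rw [hc]; ring
  have hRHS : ∏ j ∈ range (n + 1), ((c + (j:ℝ)) ^ 2 / ((1 + x + j) * (1 + y + j)))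
      = (∏ j ∈ range (n + 1), (c + (j:ℝ))) ^ 2 /
        ((∏ j ∈ range (n + 1), (1 + x + (j:ℝ))) * (∏ j ∈ range (n + 1), (1 + y + (j:ℝ)))) := by
    rw [Finset.prod_div_distrib, Finset.prod_mul_distrib, Finset.prod_pow]
  rw [hRHS, Real.GammaSeq, Real.GammaSeq, Real.GammaSeq]
  rw [div_mul_div_comm, div_pow, div_eq_div_iff (by positivity) (by positivity)]
  rw [mul_pow, ← hpow]
  field_simp

lemma gammaHasSum (x y : ℝ) (hx : 0 < x) (hy : 0 < y) :
    HasSum (fun j : ℕ => Real.log ((1 + (x + y) / 2 + j) ^ 2 / ((1 + x + j) * (1 + y + j))))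
      (Real.log (Real.Gamma (1 + x) * Real.Gamma (1 + y) /
        (Real.Gamma (1 + (x + y) / 2)) ^ 2)) := by
  set c : ℝ := 1 + (x + y) / 2 with hc
  set w : ℕ → ℝ := fun j => (c + j) ^ 2 / ((1 + x + j) * (1 + y + j)) with hw
  have hwpos : ∀ j : ℕ, 0 < w j := fun j => by
    have h1 : (0:ℝ) < c + j := by rw [hc]; positivity
    have h2 : (0:ℝ) < (1 + x + j) := by positivity
    have h3 : (0:ℝ) < (1 + y + j) := by positivity
    positivity
  have hwge : ∀ j : ℕ, 1 ≤ w j := fun j => by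
    rw [hw, one_le_div (by positivity)]
    rw [hc]
    nlinarith [sq_nonneg (x - y), Nat.cast_nonneg (α := ℝ) j]
  have hΓx := Real.Gamma_pos_of_pos (show (0:ℝ) < 1 + x by linarith)
  have hΓy := Real.Gamma_pos_of_pos (show (0:ℝ) < 1 + y by linarith)
  have hΓc := Real.Gamma_pos_of_pos (show (0:ℝ) < c by rw [hc]; positivity)
  have hGpos : 0 < Real.Gamma (1 + x) * Real.Gamma (1 + y) / (Real.Gamma c) ^ 2 := by
    positivity
  have hG : Tendsto (fun n : ℕ => Real.GammaSeq (1 + x) n * Real.GammaSeq (1 + y) n /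
      (Real.GammaSeq c n) ^ 2) atTop
      (𝓝 (Real.Gamma (1 + x) * Real.Gamma (1 + y) / (Real.Gamma c) ^ 2)) := by
    exact ((Real.GammaSeq_tendsto_Gamma (1 + x)).mul
      (Real.GammaSeq_tendsto_Gamma (1 + y))).div
      ((Real.GammaSeq_tendsto_Gamma c).pow 2) (by positivity)
  have hP : Tendsto (fun n : ℕ => ∏ j ∈ range (n + 1), w j) atTop
      (𝓝 (Real.Gamma (1 + x) * Real.Gamma (1 + y) / (Real.Gamma c) ^ 2)) := by
    apply hG.congr'
    filter_upwards [eventually_ge_atTop 1] with n hn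
    exact gammaRatio x y hx hy n hn
  have hlog : Tendsto (fun n : ℕ => ∑ j ∈ range (n + 1), Real.log (w j)) atTop
      (𝓝 (Real.log (Real.Gamma (1 + x) * Real.Gamma (1 + y) / (Real.Gamma c) ^ 2))) := by
    have := ((Real.continuousAt_log hGpos.ne').tendsto).comp hP
    apply this.congr
    intro n
    exact Real.log_prod fun j _ => (hwpos j).ne' 
  have hlog' : Tendsto (fun n : ℕ => ∑ j ∈ range n, Real.log (w j)) atTop
      (𝓝 (Real.log (Real.Gamma (1 + x) * Real.Gamma (1 + y) / (Real.Gamma c) ^ 2))) :=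
    (tendsto_add_atTop_iff_nat 1).mp hlog
  rw [hasSum_iff_tendsto_nat_of_nonneg (fun j => Real.log_nonneg (hwge j))]
  exact hlog'

lemma logTail (t : ℝ) (ht0 : 0 ≤ t) (ht1 : t < 1) (m : ℕ) (hm : 1 ≤ m) :
    0 ≤ -Real.log (1 - t) - ∑ k ∈ Finset.Icc 1 (m - 1), t ^ k / k ∧
    -Real.log (1 - t) - ∑ k ∈ Finset.Icc 1 (m - 1), t ^ k / k ≤ t ^ m / (m * (1 - t)) := by
  obtain ⟨n, rfl⟩ : ∃ n, m = n + 1 := ⟨m - 1, by omega⟩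
  have hmn : (n + 1 - 1 : ℕ) = n := by omega
  rw [hmn]
  have habs : |t| < 1 := by rw [abs_of_nonneg ht0]; exact ht1
  have h := Real.hasSum_pow_div_log_of_abs_lt_one habs
  have hpartial : ∑ k ∈ Finset.range n, t ^ (k + 1) / (k + 1 : ℝ) =
      ∑ k ∈ Finset.Icc 1 n, t ^ k / (k : ℝ) := by
    rw [← Finset.Ico_add_one_right_eq_Icc, Finset.sum_Ico_eq_sum_range]
    apply Finset.sum_congr (by congr 1 <;> omega)
    intro i _
    push_cast
    ring_nf
  set T : ℝ := -Real.log (1 - t) - ∑ k ∈ Finset.Icc 1 n, t ^ k / (k : ℝ) with hT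
  have htail : HasSum (fun k : ℕ => t ^ (k + n + 1) / ((k + n : ℕ) + 1 : ℝ)) T := by
    have h2 := (hasSum_nat_add_iff' (f := fun k : ℕ => t ^ (k + 1) / ((k : ℝ) + 1)) n
      (g := -Real.log (1 - t))).mpr h
    rw [hpartial] at h2
    exact h2
  have hterm_nonneg : ∀ k : ℕ, 0 ≤ t ^ (k + n + 1) / ((k + n : ℕ) + 1 : ℝ) := by
    intro k; positivity
  constructor
  · exact htail.nonneg hterm_nonneg
  · have hgeom : HasSum (fun k : ℕ => t ^ (n + 1) / (n + 1 : ℝ) * t ^ k)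
        (t ^ (n + 1) / (n + 1 : ℝ) * (1 - t)⁻¹) :=
      (hasSum_geometric_of_lt_one ht0 ht1).mul_left _
    have hle : ∀ k : ℕ, t ^ (k + n + 1) / ((k + n : ℕ) + 1 : ℝ) ≤
        t ^ (n + 1) / (n + 1 : ℝ) * t ^ k := by
      intro k
      have h1 : t ^ (k + n + 1) = t ^ (n + 1) * t ^ k := by ring
      rw [h1]
      have h2 : (0:ℝ) < (n : ℝ) + 1 := by positivity
      have h3 : ((n : ℝ) + 1) ≤ ((k + n : ℕ) : ℝ) + 1 := by push_cast; linarith [Nat.cast_nonneg (α := ℝ) k]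
      calc t ^ (n + 1) * t ^ k / (((k + n : ℕ) : ℝ) + 1)
          ≤ t ^ (n + 1) * t ^ k / ((n : ℝ) + 1) := by
            apply div_le_div_of_nonneg_left (by positivity) h2 h3
        _ = t ^ (n + 1) / ((n : ℝ) + 1) * t ^ k := by ring
    have := hasSum_le hle htail hgeom
    refine this.trans (le_of_eq ?_)
    have h1t : (0:ℝ) < 1 - t := by linarith
    push_cast
    field_simp

lemma zetaTail (a : ℝ) (ha : 1 ≤ a) (p : ℕ) (hp : 2 ≤ p) :
    Summable (fun j : ℕ => ((a + j) ^ p)⁻¹) ∧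
    ∑' j : ℕ, ((a + j) ^ p)⁻¹ ≤ (a ^ p)⁻¹ + (a ^ (p - 1))⁻¹ / (p - 1) := by
  obtain ⟨q, rfl⟩ : ∃ q, p = q + 1 := ⟨p - 1, by omega⟩
  have hq : 1 ≤ q := by omega
  have hq0 : (0:ℝ) < q := by exact_mod_cast hq
  have hpos : ∀ j : ℕ, (0:ℝ) < a + j := fun j => by positivity
  set v : ℕ → ℝ := fun j => ((a + (j + 1 : ℕ)) ^ (q + 1))⁻¹ with hv
  have hv_nonneg : ∀ j, 0 ≤ v j := fun j => by positivity
  have hv_le : ∀ j : ℕ, v j ≤ (((a + j) ^ q)⁻¹ - ((a + (j+1:ℕ)) ^ q)⁻¹) / q := by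
    intro j
    have h := teleIneq (a + j) (by have := j.cast_nonneg (α := ℝ); linarith) q
    rw [le_div_iff₀ hq0]
    show ((a + (j + 1 : ℕ)) ^ (q + 1))⁻¹ * q ≤ _
    push_cast
    push_cast at h
    calc ((a + (↑j + 1)) ^ (q + 1))⁻¹ * q = q * (((a + ↑j + 1) ^ (q + 1))⁻¹) := by ring_nf
      _ ≤ ((a + ↑j) ^ q)⁻¹ - ((a + ↑j + 1) ^ q)⁻¹ := h
      _ = ((a + ↑j) ^ q)⁻¹ - ((a + (↑j + 1)) ^ q)⁻¹ := by ring_nf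
  have hv_sum_le : ∀ n : ℕ, ∑ j ∈ range n, v j ≤ (a ^ q)⁻¹ / q := by
    intro n
    calc ∑ j ∈ range n, v j
        ≤ ∑ j ∈ range n, (((a + j) ^ q)⁻¹ - ((a + (j+1:ℕ)) ^ q)⁻¹) / q :=
          Finset.sum_le_sum fun j _ => hv_le j
      _ = (∑ j ∈ range n, (((a + j) ^ q)⁻¹ - ((a + (j+1:ℕ)) ^ q)⁻¹)) / q :=
          (Finset.sum_div _ _ _).symm
      _ = (((a + (0:ℕ)) ^ q)⁻¹ - ((a + (n:ℕ)) ^ q)⁻¹) / q := by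
          rw [Finset.sum_range_sub' (fun j => ((a + (j:ℕ)) ^ q)⁻¹) n]
      _ ≤ (a ^ q)⁻¹ / q := by
          have h1 : (0:ℝ) ≤ ((a + (n:ℕ)) ^ q)⁻¹ := by positivity
          have h2 : ((a + (0:ℕ)) ^ q)⁻¹ = (a ^ q)⁻¹ := by norm_num
          rw [h2]
          gcongr
          linarith
  have hv_summable : Summable v :=
    summable_of_sum_range_le hv_nonneg hv_sum_le
  have hv_tsum : ∑' j, v j ≤ (a ^ q)⁻¹ / q :=
    Summable.tsum_le_of_sum_range_le hv_summable hv_sum_le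
  have hsum : Summable (fun j : ℕ => ((a + j) ^ (q+1))⁻¹) := by
    rw [← summable_nat_add_iff 1]
    exact hv_summable
  refine ⟨hsum, ?_⟩
  rw [Summable.tsum_eq_zero_add hsum]
  have h0 : ((a + (0:ℕ)) ^ (q+1))⁻¹ = (a ^ (q+1))⁻¹ := by norm_num
  rw [h0]
  have : (q + 1 - 1 : ℕ) = q := by omega
  rw [this]
  have hcast : ((q + 1 : ℕ) : ℝ) - 1 = (q : ℝ) := by push_cast; ring
  rw [hcast]
  have hv_tsum' : ∑' (n : ℕ), ((a + ((n + 1 : ℕ) : ℝ)) ^ (q + 1))⁻¹ ≤ (a ^ q)⁻¹ / q := hv_tsum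
  linarith

set_option maxHeartbeats 1000000 in
theorem log_gurland_star_partial_sum_bound (x y : ℝ) (hx : 0 < x) (hy : 0 < y)
    (hQ : |x - y| / (2 * (1 + Real.sqrt (x * y))) < 1) (m : ℕ) (hm : 2 ≤ m) :
    0 ≤ Real.log (Real.Gamma (1 + x) * Real.Gamma (1 + y) /
          (Real.Gamma (1 + (x + y) / 2)) ^ 2) -
        (∑ k ∈ Finset.Icc 1 (m - 1),
          (1 / (k : ℝ)) * ((x - y) / 2) ^ (2 * k) *
            hurwitzZetaNat (2 * k) (1 + (x + y) / 2)) ∧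
    Real.log (Real.Gamma (1 + x) * Real.Gamma (1 + y) /
          (Real.Gamma (1 + (x + y) / 2)) ^ 2) -
        (∑ k ∈ Finset.Icc 1 (m - 1),
          (1 / (k : ℝ)) * ((x - y) / 2) ^ (2 * k) *
            hurwitzZetaNat (2 * k) (1 + (x + y) / 2)) ≤
      (1 / (m : ℝ)) * (|x - y| / (2 * (1 + Real.sqrt (x * y)))) ^ (2 * m) *
        (1 + (1 + Real.sqrt (x * y)) / (2 * (m : ℝ) - 1)) := by
  have hm1 : 1 ≤ m := by omega
  have hm0 : (0:ℝ) < m := by exact_mod_cast (by omega : 0 < m)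
  set s : ℝ := Real.sqrt (x * y) with hs
  have hs0 : 0 ≤ s := Real.sqrt_nonneg _
  have hssq : s ^ 2 = x * y := Real.sq_sqrt (by positivity)
  have hamg : s ≤ (x + y) / 2 := by
    rw [hs, show (x+y)/2 = Real.sqrt (((x+y)/2)^2) from
      (Real.sqrt_sq (by positivity)).symm]
    exact Real.sqrt_le_sqrt (by nlinarith [sq_nonneg (x - y)])
  set a : ℝ := 1 + s with ha
  have ha1 : 1 ≤ a := by rw [ha]; linarith
  have ha0 : (0:ℝ) < a := by linarith
  set c : ℝ := 1 + (x + y) / 2 with hc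
  have hac : a ≤ c := by rw [ha, hc]; linarith
  have hc0 : (0:ℝ) < c := by linarith
  set d : ℝ := (x - y) / 2 with hd
  have hd2a : d ^ 2 < a ^ 2 := by
    have h2a : |x - y| < 2 * a := by
      rwa [div_lt_one (by positivity)] at hQ
    have := abs_nonneg (x - y)
    nlinarith [sq_abs (x - y)]
  set t : ℕ → ℝ := fun j => d ^ 2 / (c + j) ^ 2 with htdef
  have hcj : ∀ j : ℕ, (0:ℝ) < c + j := fun j => by positivity
  have haj : ∀ j : ℕ, (0:ℝ) < a + j := fun j => by positivity
  have hajcj : ∀ j : ℕ, a + (j:ℝ) ≤ c + j := fun j => by linarith [hac]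
  have ht0 : ∀ j, 0 ≤ t j := fun j => by rw [htdef]; positivity
  have ht1 : ∀ j, t j < 1 := by
    intro j
    rw [htdef, div_lt_one (by positivity)]
    have h1 : a ^ 2 ≤ (c + j) ^ 2 := by nlinarith [haj j, hajcj j, hcj j]
    linarith [hd2a]
  have hE : ∀ j : ℕ, (0:ℝ) < (1 + x + j) * (1 + y + j) := fun j => by positivity
  have h1t : ∀ j : ℕ, 1 - t j = (1 + x + j) * (1 + y + j) / (c + j) ^ 2 := by
    intro j
    rw [htdef]
    field_simp
    rw [hc, hd]
    ring
  -- the log terms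
  set f : ℕ → ℝ := fun j => Real.log ((c + j) ^ 2 / ((1 + x + j) * (1 + y + j))) with hfdef
  have hft : ∀ j : ℕ, f j = -Real.log (1 - t j) := by
    intro j
    rw [hfdef, h1t j, ← Real.log_inv, inv_div]
  have h1 : HasSum f (Real.log (Real.Gamma (1 + x) * Real.Gamma (1 + y) /
      (Real.Gamma (1 + (x + y) / 2)) ^ 2)) := gammaHasSum x y hx hy
  -- partial sums
  set P : ℕ → ℝ := fun j => ∑ k ∈ Finset.Icc 1 (m - 1), (t j) ^ k / k with hPdef
  -- per-j bounds from logTail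
  have hgl : ∀ j, 0 ≤ f j - P j := by
    intro j
    rw [hft j]
    exact (logTail (t j) (ht0 j) (ht1 j) m hm1).1
  have hgu : ∀ j, f j - P j ≤ t j ^ m / (m * (1 - t j)) := by
    intro j
    rw [hft j]
    exact (logTail (t j) (ht0 j) (ht1 j) m hm1).2
  -- bound the tail term by the zeta-type term
  have hBj : ∀ j : ℕ, t j ^ m / (m * (1 - t j)) ≤
      1 / (m:ℝ) * (d ^ 2) ^ m * ((a + j) ^ (2 * m))⁻¹ := by
    intro j
    obtain ⟨M, rfl⟩ : ∃ M, m = M + 2 := ⟨m - 2, by omega⟩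
    have hEa : (a + (j:ℝ)) ^ 2 ≤ (1 + x + j) * (1 + y + j) := by
      have hj0 : (0:ℝ) ≤ (j:ℝ) := j.cast_nonneg
      nlinarith [hamg, hssq, mul_nonneg (by linarith : (0:ℝ) ≤ 1 + (j:ℝ))
        (by linarith : (0:ℝ) ≤ x + y - 2 * s)]
    have h1tj : 1 - d ^ 2 / (c + (j:ℝ)) ^ 2 =
        (1 + x + j) * (1 + y + j) / (c + j) ^ 2 := by
      have := h1t j
      simpa [htdef] using this
    have h := ratioBound (d ^ 2) (c + j) (a + j) ((1 + x + j) * (1 + y + j))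
      (by positivity) (haj j) (hajcj j) hEa (hE j) h1tj M
    simp only [htdef]
    rw [pow_mul]
    push_cast
    exact h
  -- summability of zeta-type series
  have hzc : ∀ k : ℕ, 1 ≤ k → Summable (fun j : ℕ => ((c + j) ^ (2 * k))⁻¹) :=
    fun k hk => (zetaTail c (by linarith) (2 * k) (by omega)).1
  have hza := zetaTail a ha1 (2 * m) (by omega)
  -- each term of P is summable
  have htk : ∀ k : ℕ, 1 ≤ k → ∀ j : ℕ, t j ^ k / k =
      (d ^ 2) ^ k / k * ((c + j) ^ (2 * k))⁻¹ := by
    intro k hk j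
    simp only [htdef]
    rw [div_pow, pow_mul]
    ring
  have hPk_summable : ∀ k ∈ Finset.Icc 1 (m - 1), Summable (fun j => t j ^ k / (k:ℝ)) := by
    intro k hk
    rw [Finset.mem_Icc] at hk
    apply Summable.congr (((hzc k hk.1).mul_left ((d ^ 2) ^ k / (k:ℝ))))
    intro j
    rw [htk k hk.1 j]
  have hP_summable : Summable P := by
    rw [hPdef]
    exact summable_sum hPk_summable
  have hf_summable : Summable f := h1.summable
  -- identification of partial sums with the zeta sum
  have hSm : ∑' j, P j = ∑ k ∈ Finset.Icc 1 (m - 1),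
      (1 / (k : ℝ)) * ((x - y) / 2) ^ (2 * k) * hurwitzZetaNat (2 * k) (1 + (x + y) / 2) := by
    rw [hPdef, Summable.tsum_finsetSum hPk_summable]
    apply Finset.sum_congr rfl
    intro k hk
    rw [Finset.mem_Icc] at hk
    have e1 : ∀ j : ℕ, t j ^ k / (k:ℝ) = (d ^ 2) ^ k / k * ((c + j) ^ (2 * k))⁻¹ :=
      htk k hk.1
    rw [tsum_congr e1, tsum_mul_left]
    have e2 : hurwitzZetaNat (2 * k) (1 + (x + y) / 2) = ∑' j : ℕ, ((c + j) ^ (2 * k))⁻¹ := by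
      rw [hurwitzZetaNat]
      apply tsum_congr
      intro j
      rw [one_div, add_comm (j:ℝ)]
    rw [e2]
    have e3 : ((x - y) / 2) ^ (2 * k) = (d ^ 2) ^ k := by
      rw [hd, pow_mul]
    rw [e3]
    ring
  -- difference as tsum of remainders
  have hdiff : Real.log (Real.Gamma (1 + x) * Real.Gamma (1 + y) /
        (Real.Gamma (1 + (x + y) / 2)) ^ 2) -
      (∑ k ∈ Finset.Icc 1 (m - 1),
        (1 / (k : ℝ)) * ((x - y) / 2) ^ (2 * k) *
          hurwitzZetaNat (2 * k) (1 + (x + y) / 2)) = ∑' j, (f j - P j) := by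
    rw [Summable.tsum_sub hf_summable hP_summable, h1.tsum_eq, hSm]
  rw [hdiff]
  constructor
  · exact tsum_nonneg hgl
  · have hg_summable : Summable (fun j => f j - P j) := hf_summable.sub hP_summable
    have hB_summable : Summable (fun j : ℕ => 1 / (m:ℝ) * (d ^ 2) ^ m * ((a + j) ^ (2 * m))⁻¹) :=
      hza.1.mul_left _
    have hle : ∀ j, f j - P j ≤ 1 / (m:ℝ) * (d ^ 2) ^ m * ((a + j) ^ (2 * m))⁻¹ :=
      fun j => (hgu j).trans (hBj j)
    have h2 : ∑' j, (f j - P j) ≤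
        ∑' j : ℕ, 1 / (m:ℝ) * (d ^ 2) ^ m * ((a + j) ^ (2 * m))⁻¹ :=
      Summable.tsum_le_tsum hle hg_summable hB_summable
    refine h2.trans ?_
    rw [tsum_mul_left]
    have h3 : 1 / (m:ℝ) * (d ^ 2) ^ m * ∑' j : ℕ, ((a + j) ^ (2 * m))⁻¹ ≤
        1 / (m:ℝ) * (d ^ 2) ^ m * ((a ^ (2 * m))⁻¹ + (a ^ (2 * m - 1))⁻¹ / ((2 * m : ℕ) - 1 : ℝ)) := by
      apply mul_le_mul_of_nonneg_left hza.2 (by positivity)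
    refine h3.trans (le_of_eq ?_)
    -- final algebraic identity
    have hm2 : (2:ℝ) * (m:ℝ) - 1 ≠ 0 := by
      have : (2:ℝ) ≤ (m:ℝ) := by exact_mod_cast hm
      nlinarith
    have hcast1 : ((2 * m : ℕ) : ℝ) - 1 = 2 * (m:ℝ) - 1 := by push_cast; ring
    have hapow : a ^ (2 * m - 1) * a = a ^ (2 * m) := by
      rw [← pow_succ]
      congr 1
      omega
    have habs : (|x - y| / (2 * a)) ^ (2 * m) = (d ^ 2) ^ m / (a ^ 2) ^ m := by
      have hsq2 : (|x - y| / (2 * a)) ^ 2 = d ^ 2 / a ^ 2 := by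
        rw [div_pow, sq_abs, mul_pow, hd, div_pow, div_div]
      rw [pow_mul, hsq2, div_pow]
    have hinv : (a ^ (2 * m))⁻¹ * a = (a ^ (2 * m - 1))⁻¹ := by
      rw [← hapow, mul_inv, mul_assoc, inv_mul_cancel₀ ha0.ne', mul_one]
    rw [hcast1, habs, show (a ^ 2) ^ m = a ^ (2 * m) from (pow_mul a 2 m).symm, ← hinv]
    ring
end

section
/- Let x, y > 0 satisfy |x-y|/(2(1+√(xy))) < 1. Then ln G⋆(x,y) = ∑_{k=1}^∞ (1/k)((x-y)/2)^{2k} ζ(2k, 1+(x+y)/2), i.e., the partial sums S_m converge to ln G⋆(x,y) as m → ∞. -/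
theorem log_gurland_star_series (x y : ℝ) (hx : 0 < x) (hy : 0 < y)
    (hQ : |x - y| / (2 * (1 + Real.sqrt (x * y))) < 1) :
    Real.log (Real.Gamma (1 + x) * Real.Gamma (1 + y) /
        (Real.Gamma (1 + (x + y) / 2)) ^ 2) =
      ∑' k : ℕ, (1 / ((k : ℝ) + 1)) * ((x - y) / 2) ^ (2 * (k + 1)) *
        hurwitzZetaNat (2 * (k + 1)) (1 + (x + y) / 2) := by
  have hxy : 0 < x * y := mul_pos hx hy
  set s : ℝ := (x + y) / 2 with hs_def
  set t : ℝ := (x - y) / 2 with ht_def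
  have hs : 0 < s := by positivity
  -- AM-GM and the key inequality |t| < 1 + s
  have hamgm : Real.sqrt (x * y) ≤ s := by
    rw [show s = Real.sqrt (s ^ 2) from (Real.sqrt_sq hs.le).symm]
    exact Real.sqrt_le_sqrt (by nlinarith [sq_nonneg (x - y)])
  have hts : |t| < 1 + s := by
    have hd : 0 < 2 * (1 + Real.sqrt (x * y)) := by positivity
    rw [div_lt_one hd] at hQ
    have : |t| = |x - y| / 2 := by rw [ht_def, abs_div]; norm_num
    rw [this]
    nlinarith
  have hts2 : t ^ 2 < (1 + s) ^ 2 := by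
    have := abs_nonneg t
    nlinarith [sq_abs t]
  -- basic notation
  set a : ℕ → ℝ := fun n => (n : ℝ) + 1 + s with ha_def
  have hapos : ∀ n, 0 < a n := fun n => by
    have : (0:ℝ) ≤ n := Nat.cast_nonneg n
    simp only [ha_def]; linarith
  have haone : ∀ n, 1 + s ≤ a n := fun n => by
    have : (0:ℝ) ≤ n := Nat.cast_nonneg n
    simp only [ha_def]; linarith
  have hxa : ∀ n : ℕ, (0:ℝ) < 1 + x + n := fun n => by
    have : (0:ℝ) ≤ n := Nat.cast_nonneg n; linarith
  have hya : ∀ n : ℕ, (0:ℝ) < 1 + y + n := fun n => by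
    have : (0:ℝ) ≤ n := Nat.cast_nonneg n; linarith
  have hprod_key : ∀ n : ℕ, (1 + x + n) * (1 + y + n) = (a n) ^ 2 - t ^ 2 := by
    intro n; simp only [ha_def, hs_def, ht_def]; ring
  have hBpos : ∀ n : ℕ, (0:ℝ) < (1 + x + n) * (1 + y + n) := fun n =>
    mul_pos (hxa n) (hya n)
  -- the term of the log-product series
  set g : ℕ → ℝ := fun n => Real.log ((a n) ^ 2 / ((1 + x + n) * (1 + y + n))) with hg_def
  have hg_nonneg : ∀ n, 0 ≤ g n := by
    intro n
    apply Real.log_nonneg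
    rw [le_div_iff₀ (hBpos n), one_mul, hprod_key n]
    nlinarith [sq_nonneg t]
  -- Step 1: the Gamma ratio limit
  set G : ℝ := Real.Gamma (1 + x) * Real.Gamma (1 + y) / (Real.Gamma (1 + s)) ^ 2 with hG_def
  have hGpos : 0 < G := by
    apply div_pos (mul_pos (Real.Gamma_pos_of_pos (by linarith)) (Real.Gamma_pos_of_pos (by linarith)))
    positivity
  have hGammaSpos : 0 < Real.Gamma (1 + s) := Real.Gamma_pos_of_pos (by linarith)
  have hratio : ∀ n : ℕ, 1 ≤ n →
      Real.GammaSeq (1 + x) n * Real.GammaSeq (1 + y) n / (Real.GammaSeq (1 + s) n) ^ 2 =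
        ∏ j ∈ Finset.range (n + 1), ((1 + s + j) ^ 2 / ((1 + x + j) * (1 + y + j))) := by
    intro n hn
    have hN : (0:ℝ) < n := by exact_mod_cast hn
    have hfac : (0:ℝ) < (Nat.factorial n : ℝ) := by exact_mod_cast Nat.factorial_pos n
    have hPx : (0:ℝ) < ∏ j ∈ Finset.range (n + 1), (1 + x + j) :=
      Finset.prod_pos fun j _ => hxa j
    have hPy : (0:ℝ) < ∏ j ∈ Finset.range (n + 1), (1 + y + j) :=
      Finset.prod_pos fun j _ => hya j
    have hPs : (0:ℝ) < ∏ j ∈ Finset.range (n + 1), (1 + s + j) :=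
      Finset.prod_pos fun j _ => by
        have : (0:ℝ) ≤ j := Nat.cast_nonneg j; linarith
    have hpow : (n:ℝ) ^ (1 + x) * (n:ℝ) ^ (1 + y) = ((n:ℝ) ^ (1 + s)) ^ 2 := by
      rw [← Real.rpow_natCast ((n:ℝ) ^ (1 + s)) 2, ← Real.rpow_mul hN.le,
        ← Real.rpow_add hN]
      norm_num
      ring_nf
      congr 1; rw [hs_def]; ring
    have hpowpos : (0:ℝ) < (n:ℝ) ^ (1 + s) := Real.rpow_pos_of_pos hN _
    rw [Finset.prod_div_distrib, Finset.prod_mul_distrib, Finset.prod_pow]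
    simp only [Real.GammaSeq]
    rw [div_pow, mul_pow]
    field_simp
    linear_combination hpow
  -- Step 2: tendsto of log partial sums
  have hT : Filter.Tendsto (fun n : ℕ => ∑ j ∈ Finset.range (n + 1), g j) Filter.atTop
      (nhds (Real.log G)) := by
    have h1 : Filter.Tendsto (fun n => Real.GammaSeq (1 + x) n * Real.GammaSeq (1 + y) n /
        (Real.GammaSeq (1 + s) n) ^ 2) Filter.atTop (nhds G) :=
      ((Real.GammaSeq_tendsto_Gamma (1 + x)).mul
        (Real.GammaSeq_tendsto_Gamma (1 + y))).div
        ((Real.GammaSeq_tendsto_Gamma (1 + s)).pow 2) (by positivity)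
    have h2 := (Real.continuousAt_log hGpos.ne').tendsto.comp h1
    refine h2.congr' ?_
    filter_upwards [Filter.eventually_ge_atTop 1] with n hn
    rw [Function.comp_apply, hratio n hn, Real.log_prod]
    · refine Finset.sum_congr rfl fun j _ => ?_
      rw [hg_def]
      congr 2
      simp only [ha_def]; ring
    · intro j _
      have h1 : (0:ℝ) < (1 + s + j) := by
        have : (0:ℝ) ≤ (j:ℝ) := Nat.cast_nonneg j; linarith
      have h2 := hxa j
      have h3 := hya j
      positivity
  have hgSum : HasSum g (Real.log G) := by
    rw [hasSum_iff_tendsto_nat_of_nonneg hg_nonneg]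
    exact (Filter.tendsto_add_atTop_iff_nat 1).mp hT
  -- Step 3: per-n expansion of the log term
  set f : ℕ → ℕ → ℝ :=
    fun n k => t ^ (2 * (k + 1)) / (((k:ℝ) + 1) * (a n) ^ (2 * (k + 1))) with hf_def
  have hf_nonneg : ∀ n k, 0 ≤ f n k := by
    intro n k
    apply div_nonneg
    · rw [pow_mul]; positivity
    · have := hapos n; positivity
  have hfn : ∀ n, HasSum (fun k => f n k) (g n) := by
    intro n
    have han := hapos n
    have hr : |t ^ 2 / (a n) ^ 2| < 1 := by
      rw [abs_of_nonneg (by positivity), div_lt_one (by positivity)]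
      exact lt_of_lt_of_le hts2 (by nlinarith [haone n, hapos n, hs])
    have h := Real.hasSum_pow_div_log_of_abs_lt_one hr
    have heq : -Real.log (1 - t ^ 2 / (a n) ^ 2) = g n := by
      simp only [hg_def]
      rw [show (1 : ℝ) - t ^ 2 / (a n) ^ 2 = ((1 + x + n) * (1 + y + n)) / (a n) ^ 2 by
        rw [hprod_key n]; field_simp]
      rw [Real.log_div (hBpos n).ne' (by positivity),
        Real.log_div (by positivity) (hBpos n).ne']
      ring
    rw [heq] at h
    have hfe : (fun k : ℕ => (t ^ 2 / (a n) ^ 2) ^ (k + 1) / ((k:ℝ) + 1)) = fun k => f n k := by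
      funext k
      simp only [hf_def]
      rw [div_pow, ← pow_mul, ← pow_mul, div_div,
        mul_comm (a n ^ (2 * (k + 1))) ((k:ℝ) + 1)]
    rwa [hfe] at h
  -- Step 4: Fubini for the double series
  have hf0 : ∀ p : ℕ × ℕ, 0 ≤ (Function.uncurry f) p := fun p => hf_nonneg p.1 p.2
  have hfu : Summable (Function.uncurry f) := by
    rw [summable_prod_of_nonneg hf0]
    exact ⟨fun n => (hfn n).summable,
      hgSum.summable.congr fun n => ((hfn n).tsum_eq).symm⟩
  have hswap : Real.log G = ∑' k, ∑' n, f n k :=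
    calc Real.log G = ∑' n, g n := hgSum.tsum_eq.symm
    _ = ∑' n, ∑' k, f n k := tsum_congr fun n => ((hfn n).tsum_eq).symm
    _ = ∑' k, ∑' n, f n k := (Summable.tsum_comm hfu).symm
  -- Step 5: identify the inner sums with Hurwitz zeta values
  rw [hswap]
  refine tsum_congr fun k => ?_
  have hz : hurwitzZetaNat (2 * (k + 1)) (1 + s) = ∑' n, 1 / (a n) ^ (2 * (k + 1)) := by
    rw [hurwitzZetaNat]
    exact tsum_congr fun m => by rw [show (m:ℝ) + (1 + s) = a m by simp only [ha_def]; ring]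
  rw [hz, ← tsum_mul_left]
  refine tsum_congr fun n => ?_
  have hk : ((k:ℝ) + 1) ≠ 0 := by positivity
  have hA : (a n) ^ (2 * (k + 1)) ≠ 0 := pow_ne_zero _ (hapos n).ne'
  simp only [hf_def]
  field_simp
end

section
/- For all x, y > 0, ln G⋆(x,y) ≤ ((x-y)/2)² · ζ(2, 1+√(xy)). -/
open Filter Finset Real Topology

/-- Termwise key inequality. -/
lemma gurland_term_bound (x y a : ℝ) (hx : 0 < x) (hy : 0 < y) (ha : 0 < a) :
    Real.log ((a + (x + y) / 2) ^ 2 / ((a + x) * (a + y))) ≤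
      ((x - y) / 2) ^ 2 / (a + Real.sqrt (x * y)) ^ 2 := by
  set g := Real.sqrt (x * y) with hg
  have hg0 : 0 ≤ g := Real.sqrt_nonneg _
  have hg2 : g ^ 2 = x * y := Real.sq_sqrt (by positivity)
  have hgle : 2 * g ≤ x + y := by
    nlinarith [sq_nonneg (x + y - 2 * g), sq_nonneg (x + y + 2 * g), sq_nonneg (x - y)]
  have hD : 0 < (a + x) * (a + y) := by positivity
  have h1 : (a + (x + y) / 2) ^ 2 = (a + x) * (a + y) + ((x - y) / 2) ^ 2 := by ring
  have h2 : (a + g) ^ 2 ≤ (a + x) * (a + y) := by nlinarith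
  have h3 : Real.log ((a + (x + y) / 2) ^ 2 / ((a + x) * (a + y))) ≤
      ((x - y) / 2) ^ 2 / ((a + x) * (a + y)) := by
    rw [h1, add_div, div_self hD.ne']
    have := Real.log_le_sub_one_of_pos
      (show (0:ℝ) < 1 + ((x - y) / 2) ^ 2 / ((a + x) * (a + y)) by positivity)
    linarith
  refine h3.trans ?_
  exact div_le_div_of_nonneg_left (by positivity) (by positivity) h2

lemma gurland_ratio_eq (P1 P2 P3 F A B C : ℝ) (hA : A ≠ 0) (hB : B ≠ 0) (hC : C ≠ 0)
    (hF : F ≠ 0) (hP1 : P1 ≠ 0) (hP2 : P2 ≠ 0) (h : P1 * P2 = P3 ^ 2) :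
    P1 * F / A * (P2 * F / B) / (P3 * F / C) ^ 2 = C ^ 2 / (A * B) := by
  have h3 : (P3 * F / C) ^ 2 = P1 * P2 * F ^ 2 / C ^ 2 := by
    rw [div_pow, mul_pow, h]
  rw [h3]
  field_simp

theorem log_gurland_star_upper_bound (x y : ℝ) (hx : 0 < x) (hy : 0 < y) :
    Real.log (Real.Gamma (1 + x) * Real.Gamma (1 + y) /
        (Real.Gamma (1 + (x + y) / 2)) ^ 2) ≤
      ((x - y) / 2) ^ 2 * (∑' n : ℕ, 1 / ((n : ℝ) + (1 + Real.sqrt (x * y))) ^ 2) := by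
  set s0 := (x + y) / 2 with hs0
  set g := Real.sqrt (x * y) with hg
  have hg0 : 0 ≤ g := Real.sqrt_nonneg _
  have hs0p : 0 < s0 := by rw [hs0]; positivity
  set Q : ℕ → ℝ := fun n => ∏ j ∈ Finset.range (n + 1),
    ((1 + s0) + j) ^ 2 / (((1 + x) + j) * ((1 + y) + j)) with hQdef
  -- summability
  have hsum : Summable (fun n : ℕ => 1 / ((n : ℝ) + (1 + g)) ^ 2) := by
    have h := (Real.summable_one_div_nat_add_rpow (1 + g) 2).mpr one_lt_two
    refine h.congr fun n => ?_
    rw [abs_of_pos (by positivity), show ((2:ℝ)) = ((2:ℕ):ℝ) by norm_num,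
      Real.rpow_natCast]
  -- bound on log Q n, for all n
  have hbound : ∀ n : ℕ, Real.log (Q n) ≤
      ((x - y) / 2) ^ 2 * ∑' m : ℕ, 1 / ((m : ℝ) + (1 + g)) ^ 2 := by
    intro n
    have hterm : ∀ j ∈ Finset.range (n + 1),
        ((1 + s0) + (j:ℝ)) ^ 2 / (((1 + x) + j) * ((1 + y) + j)) ≠ 0 := by
      intro j _
      have : (0:ℝ) < ((1 + s0) + j) ^ 2 / (((1 + x) + j) * ((1 + y) + j)) := by positivity
      exact this.ne'
    rw [hQdef, Real.log_prod hterm]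
    have step1 : ∑ j ∈ Finset.range (n + 1),
        Real.log (((1 + s0) + (j:ℝ)) ^ 2 / (((1 + x) + j) * ((1 + y) + j))) ≤
        ∑ j ∈ Finset.range (n + 1), ((x - y) / 2) ^ 2 * (1 / ((j : ℝ) + (1 + g)) ^ 2) := by
      refine Finset.sum_le_sum fun j _ => ?_
      have hkey := gurland_term_bound x y (1 + (j:ℝ)) hx hy (by positivity)
      have e1 : ((1:ℝ) + (j:ℝ)) + (x + y) / 2 = (1 + s0) + j := by rw [hs0]; ring
      have e2 : ((1:ℝ) + (j:ℝ)) + x = (1 + x) + j := by ring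
      have e3 : ((1:ℝ) + (j:ℝ)) + y = (1 + y) + j := by ring
      have e4 : ((1:ℝ) + (j:ℝ)) + g = (j : ℝ) + (1 + g) := by ring
      rw [e1, e2, e3, e4] at hkey
      calc Real.log (((1 + s0) + (j:ℝ)) ^ 2 / (((1 + x) + j) * ((1 + y) + j)))
          ≤ ((x - y) / 2) ^ 2 / ((j : ℝ) + (1 + g)) ^ 2 := hkey
        _ = ((x - y) / 2) ^ 2 * (1 / ((j : ℝ) + (1 + g)) ^ 2) := by ring
    refine step1.trans ?_
    rw [← Finset.mul_sum]
    refine mul_le_mul_of_nonneg_left ?_ (by positivity)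
    exact Summable.sum_le_tsum _ (fun i _ => by positivity) hsum
  -- Q tends to the Gamma ratio
  have hGpos : ∀ t : ℝ, 0 < t → 0 < Real.Gamma (1 + t) :=
    fun t ht => Real.Gamma_pos_of_pos (by linarith)
  have hL : 0 < Real.Gamma (1 + x) * Real.Gamma (1 + y) / (Real.Gamma (1 + s0)) ^ 2 := by
    have h1 := hGpos x hx
    have h2 := hGpos y hy
    have h3 := hGpos s0 hs0p
    positivity
  have htend : Tendsto Q atTop
      (𝓝 (Real.Gamma (1 + x) * Real.Gamma (1 + y) / (Real.Gamma (1 + s0)) ^ 2)) := by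
    have h0 : Tendsto (fun n => Real.GammaSeq (1 + x) n * Real.GammaSeq (1 + y) n /
        (Real.GammaSeq (1 + s0) n) ^ 2) atTop
        (𝓝 (Real.Gamma (1 + x) * Real.Gamma (1 + y) / (Real.Gamma (1 + s0)) ^ 2)) := by
      refine Tendsto.div ((Real.GammaSeq_tendsto_Gamma (1 + x)).mul
        (Real.GammaSeq_tendsto_Gamma (1 + y)))
        ((Real.GammaSeq_tendsto_Gamma (1 + s0)).pow 2) ?_
      exact pow_ne_zero 2 (hGpos s0 hs0p).ne'
    refine h0.congr' ?_
    filter_upwards [eventually_ge_atTop 1] with n hn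
    have hN : (0:ℝ) < (n : ℝ) := by exact_mod_cast hn
    have hA : (0:ℝ) < ∏ j ∈ Finset.range (n + 1), ((1 + x) + (j:ℝ)) :=
      Finset.prod_pos fun j _ => by positivity
    have hB : (0:ℝ) < ∏ j ∈ Finset.range (n + 1), ((1 + y) + (j:ℝ)) :=
      Finset.prod_pos fun j _ => by positivity
    have hC : (0:ℝ) < ∏ j ∈ Finset.range (n + 1), ((1 + s0) + (j:ℝ)) :=
      Finset.prod_pos fun j _ => by positivity
    have hF : (0:ℝ) < (n.factorial : ℝ) := by positivity
    have hP1 : (0:ℝ) < (n:ℝ) ^ ((1:ℝ) + x) := Real.rpow_pos_of_pos hN _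
    have hP2 : (0:ℝ) < (n:ℝ) ^ ((1:ℝ) + y) := Real.rpow_pos_of_pos hN _
    have hP3 : (0:ℝ) < (n:ℝ) ^ ((1:ℝ) + s0) := Real.rpow_pos_of_pos hN _
    have hfact : (n:ℝ) ^ ((1:ℝ) + x) * (n:ℝ) ^ ((1:ℝ) + y) =
        ((n:ℝ) ^ ((1:ℝ) + s0)) ^ 2 := by
      rw [← Real.rpow_natCast ((n:ℝ) ^ ((1:ℝ) + s0)) 2, ← Real.rpow_mul hN.le,
        ← Real.rpow_add hN]
      congr 1
      rw [hs0]; push_cast; ring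
    have hQn : Q n = (∏ j ∈ Finset.range (n + 1), ((1 + s0) + (j:ℝ))) ^ 2 /
        ((∏ j ∈ Finset.range (n + 1), ((1 + x) + (j:ℝ))) *
         (∏ j ∈ Finset.range (n + 1), ((1 + y) + (j:ℝ)))) := by
      simp only [hQdef]
      rw [Finset.prod_div_distrib, Finset.prod_mul_distrib, Finset.prod_pow]
    rw [hQn]
    simp only [Real.GammaSeq]
    exact gurland_ratio_eq _ _ _ _ _ _ _ hA.ne' hB.ne' hC.ne' hF.ne' hP1.ne' hP2.ne' hfact
  -- conclude
  have hlog : Tendsto (fun n => Real.log (Q n)) atTop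
      (𝓝 (Real.log (Real.Gamma (1 + x) * Real.Gamma (1 + y) / (Real.Gamma (1 + s0)) ^ 2))) :=
    ((Real.continuousAt_log hL.ne').tendsto).comp htend
  exact le_of_tendsto hlog (Eventually.of_forall hbound)
end

section
/- For all x, y > 0, the classical Gurland ratio satisfies Γ(x)Γ(y)/Γ((x+y)/2)² ≥ ((x+y)²/(4xy)) · exp(((x-y)/2)² ζ(2, 1+(x+y)/2)). -/
open Filter Finset Topology

theorem gurland_ratio_lower_bound (x y : ℝ) (hx : 0 < x) (hy : 0 < y) :
    Real.Gamma x * Real.Gamma y / (Real.Gamma ((x + y) / 2)) ^ 2 ≥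
      ((x + y) ^ 2 / (4 * x * y)) *
        Real.exp (((x - y) / 2) ^ 2 *
          ∑' n : ℕ, 1 / ((n : ℝ) + (1 + (x + y) / 2)) ^ 2) := by
  set m : ℝ := (x + y) / 2 with hm_def
  have hm : 0 < m := by positivity
  set d2 : ℝ := ((x - y) / 2) ^ 2 with hd2_def
  have hd2 : 0 ≤ d2 := sq_nonneg _
  have hxy : m ^ 2 - d2 = x * y := by rw [hm_def, hd2_def]; ring
  have hGm : 0 < Real.Gamma m := Real.Gamma_pos_of_pos hm
  -- summability
  have hsum : Summable (fun n : ℕ => 1 / ((n : ℝ) + (1 + m)) ^ 2) := by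
    have h1 : Summable (fun n : ℕ => 1 / ((n : ℝ) + 1) ^ 2) := by
      have := Real.summable_one_div_nat_pow.mpr one_lt_two
      have h2 := (summable_nat_add_iff (f := fun n : ℕ => 1 / (n : ℝ) ^ 2) 1).mpr this
      exact h2.congr fun n => by push_cast; ring
    refine Summable.of_nonneg_of_le (fun n => by positivity) (fun n => ?_) h1
    have hle : ((n : ℝ) + 1) ^ 2 ≤ ((n : ℝ) + (1 + m)) ^ 2 := by nlinarith [Nat.cast_nonneg (α := ℝ) n]
    exact one_div_le_one_div_of_le (by positivity) hle
  -- limit of the A sequence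
  have hA : Tendsto (fun n => Real.GammaSeq x n * Real.GammaSeq y n / (Real.GammaSeq m n) ^ 2)
      atTop (𝓝 (Real.Gamma x * Real.Gamma y / (Real.Gamma m) ^ 2)) := by
    exact ((Real.GammaSeq_tendsto_Gamma x).mul (Real.GammaSeq_tendsto_Gamma y)).div
      ((Real.GammaSeq_tendsto_Gamma m).pow 2) (by positivity)
  -- limit of the B sequence
  have hB : Tendsto (fun n => ((x + y) ^ 2 / (4 * x * y)) *
      Real.exp (d2 * ∑ j ∈ range n, 1 / ((j : ℝ) + (1 + m)) ^ 2)) atTop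
      (𝓝 (((x + y) ^ 2 / (4 * x * y)) *
        Real.exp (d2 * ∑' n : ℕ, 1 / ((n : ℝ) + (1 + m)) ^ 2))) := by
    exact tendsto_const_nhds.mul ((Real.continuous_exp.tendsto _).comp
      (tendsto_const_nhds.mul hsum.hasSum.tendsto_sum_nat))
  -- the pointwise inequality for n ≥ 1
  have hIneq : ∀ᶠ n in atTop, ((x + y) ^ 2 / (4 * x * y)) *
      Real.exp (d2 * ∑ j ∈ range n, 1 / ((j : ℝ) + (1 + m)) ^ 2) ≤
      Real.GammaSeq x n * Real.GammaSeq y n / (Real.GammaSeq m n) ^ 2 := by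
    filter_upwards [eventually_ge_atTop 1] with n hn
    have hn0 : (0 : ℝ) < n := by exact_mod_cast hn
    -- closed form for the GammaSeq ratio
    have key : Real.GammaSeq x n * Real.GammaSeq y n / (Real.GammaSeq m n) ^ 2 =
        ∏ j ∈ range (n + 1), ((m + j) ^ 2 / ((x + j) * (y + j))) := by
      have hPx : (0 : ℝ) < ∏ j ∈ range (n + 1), (x + (j : ℝ)) :=
        Finset.prod_pos fun j _ => by positivity
      have hPy : (0 : ℝ) < ∏ j ∈ range (n + 1), (y + (j : ℝ)) :=
        Finset.prod_pos fun j _ => by positivity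
      have hPm : (0 : ℝ) < ∏ j ∈ range (n + 1), (m + (j : ℝ)) :=
        Finset.prod_pos fun j _ => by positivity
      have hfac : (0 : ℝ) < ((n.factorial : ℕ) : ℝ) := by exact_mod_cast n.factorial_pos
      have hrp : (n : ℝ) ^ x * (n : ℝ) ^ y = ((n : ℝ) ^ m) ^ 2 := by
        rw [← Real.rpow_natCast ((n : ℝ) ^ m) 2, ← Real.rpow_mul hn0.le,
          ← Real.rpow_add hn0]
        congr 1
        rw [hm_def]; push_cast; ring
      have hnm : (0 : ℝ) < (n : ℝ) ^ m := Real.rpow_pos_of_pos hn0 m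
      have hRHS : ∏ j ∈ range (n + 1), ((m + (j : ℝ)) ^ 2 / ((x + j) * (y + j))) =
          (∏ j ∈ range (n + 1), (m + (j : ℝ))) ^ 2 /
            ((∏ j ∈ range (n + 1), (x + (j : ℝ))) * ∏ j ∈ range (n + 1), (y + (j : ℝ))) := by
        rw [Finset.prod_div_distrib, Finset.prod_pow, Finset.prod_mul_distrib]
      rw [hRHS]
      simp only [Real.GammaSeq]
      rw [div_pow, div_mul_div_comm, div_div_div_eq, mul_pow, ← hrp]
      field_simp
    rw [key, Finset.prod_range_succ']
    have h0 : (m + (0 : ℕ)) ^ 2 / ((x + (0 : ℕ)) * (y + (0 : ℕ))) = (x + y) ^ 2 / (4 * x * y) := by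
      push_cast
      rw [hm_def]
      field_simp
      ring
    rw [h0, mul_comm]
    refine mul_le_mul_of_nonneg_right ?_ (by positivity)
    calc Real.exp (d2 * ∑ j ∈ range n, 1 / ((j : ℝ) + (1 + m)) ^ 2)
        = ∏ j ∈ range n, Real.exp (d2 * (1 / ((j : ℝ) + (1 + m)) ^ 2)) := by
          rw [← Real.exp_sum, Finset.mul_sum]
      _ ≤ ∏ j ∈ range n, (m + ((j : ℝ) + 1)) ^ 2 / ((x + ((j : ℝ) + 1)) * (y + ((j : ℝ) + 1))) := by
          refine Finset.prod_le_prod (fun j _ => (Real.exp_pos _).le) (fun j _ => ?_)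
          have hEq : (x + ((j : ℝ) + 1)) * (y + ((j : ℝ) + 1)) = ((j : ℝ) + (1 + m)) ^ 2 - d2 := by
            rw [hm_def, hd2_def]; ring
          have hEq2 : (m + ((j : ℝ) + 1)) = ((j : ℝ) + (1 + m)) := by ring
          rw [hEq, hEq2]
          set t : ℝ := (j : ℝ) + (1 + m) with ht_def
          have ht : 0 < t := by positivity
          have htm : m ≤ t := by
            rw [ht_def]
            have := Nat.cast_nonneg (α := ℝ) j
            linarith
          have htd : 0 < t ^ 2 - d2 := by nlinarith [mul_pos hx hy]
          have hu1 : d2 / t ^ 2 < 1 := (div_lt_one (by positivity)).mpr (by linarith)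
          have hpos : 0 < 1 - d2 / t ^ 2 := by linarith
          have h1 : 1 - d2 / t ^ 2 ≤ Real.exp (-(d2 / t ^ 2)) := by
            have := Real.add_one_le_exp (-(d2 / t ^ 2)); linarith
          have h2 : Real.exp (d2 / t ^ 2) ≤ (1 - d2 / t ^ 2)⁻¹ := by
            have h3 := inv_anti₀ hpos h1
            rwa [Real.exp_neg, inv_inv] at h3
          have h4 : (1 - d2 / t ^ 2)⁻¹ = t ^ 2 / (t ^ 2 - d2) := by
            field_simp
          calc Real.exp (d2 * (1 / t ^ 2)) = Real.exp (d2 / t ^ 2) := by rw [mul_one_div]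
            _ ≤ (1 - d2 / t ^ 2)⁻¹ := h2
            _ = t ^ 2 / (t ^ 2 - d2) := h4
      _ = ∏ j ∈ range n, (m + ((j : ℕ) + 1 : ℕ)) ^ 2 / ((x + ((j : ℕ) + 1 : ℕ)) * (y + ((j : ℕ) + 1 : ℕ))) := by
          refine Finset.prod_congr rfl fun j _ => by push_cast; ring_nf
  rw [ge_iff_le]
  exact le_of_tendsto_of_tendsto hB hA hIneq
end
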